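/- Let k and m be positive integers with 2 + 2·log₂(m) ≤ ⌈m/k⌉. If H is a simple graph with chromatic number χ(H) > k, then the dichromatic number of the blow-up H^(m) satisfies χ⃗(H^(m)) > k. -/

import Mathlib

open Finset




/-- An orientation of a simple graph `G`: a relation choosing exactly one
direction for each edge of `G` (and relating no non-adjacent pair). -/
def IsOrientation {V : Type*} (G : SimpleGraph V) (D : V → V → Prop) : Prop :=
  (∀ u v, D u v → G.Adj u v) ∧ ∀ u v, G.Adj u v → (D u v ↔ ¬ D v u)

/-- A set `A` of vertices is acyclic for the digraph `D` if the digraph induced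
on `A` contains no directed cycle (no vertex reaches itself by a nonempty
directed walk inside `A`). -/
def IsAcyclicOn {V : Type*} (D : V → V → Prop) (A : Set V) : Prop :=
  ∀ x ∈ A, ¬ Relation.TransGen (fun a b => a ∈ A ∧ b ∈ A ∧ D a b) x x

/-- A set `A` of vertices contains a directed cycle of the digraph `D`. -/
def HasDirCycleOn {V : Type*} (D : V → V → Prop) (A : Set V) : Prop :=
  ∃ x ∈ A, Relation.TransGen (fun a b => a ∈ A ∧ b ∈ A ∧ D a b) x x

/-- The chromatic number of a digraph `D`: the minimum number of acyclic
vertex-sets whose union is the whole vertex set. -/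
noncomputable def digraphChrom {V : Type*} (D : V → V → Prop) : ℕ :=
  sInf {k : ℕ | ∃ f : V → Fin k, ∀ i : Fin k, IsAcyclicOn D {v | f v = i}}

/-- The dichromatic number of an undirected graph: the maximum chromatic number
over all orientations of its edges. -/
noncomputable def dichromatic {V : Type*} (G : SimpleGraph V) : ℕ :=
  sSup {k : ℕ | ∃ D : V → V → Prop, IsOrientation G D ∧ k = digraphChrom D}

/-- The blow-up of a simple graph `H` with power `m`: each vertex is replaced by
an independent set of size `m`, each edge by a complete bipartite graph `K_{m,m}`. -/
def blowup {α : Type*} (H : SimpleGraph α) (m : ℕ) : SimpleGraph (α × Fin m) where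
  Adj a b := H.Adj a.1 b.1
  symm := ⟨fun _ _ h => H.adj_symm h⟩
  loopless := ⟨fun a h => H.irrefl h⟩

section AuxiliaryLemmas


open Real in
lemma aux_L1 (n : ℕ) (hn : 0 < n) : (n+1)^n ≤ 3 * n^n := by
  have hnR : (0:ℝ) < n := by exact_mod_cast hn
  have h1 : ((n:ℝ)+1)^n ≤ Real.exp 1 * (n:ℝ)^n := by
    have : ((n:ℝ)+1) = (1 + 1/n) * n := by field_simp
    rw [this, mul_pow]
    have h2 : (1 + 1/(n:ℝ))^n ≤ Real.exp 1 := by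
      have := Real.add_one_le_exp (1/(n:ℝ))
      calc (1 + 1/(n:ℝ))^n ≤ (Real.exp (1/n))^n := by
            apply pow_le_pow_left₀ (by positivity)
            linarith
        _ = Real.exp 1 := by
            rw [← Real.exp_nat_mul]
            congr 1
            field_simp
      
    exact mul_le_mul_of_nonneg_right h2 (by positivity)
  have h3 : Real.exp 1 ≤ 3 := by
    have := Real.exp_one_lt_d9
    linarith
  have : ((n:ℝ)+1)^n ≤ 3 * (n:ℝ)^n := by nlinarith [pow_nonneg hnR.le n]
  exact_mod_cast this

lemma aux_L2 (n : ℕ) : n^n ≤ 3^n * n.factorial := by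
  induction n with
  | zero => simp
  | succ n ih =>
    rcases Nat.eq_zero_or_pos n with h | h
    · subst h; simp
    calc (n+1)^(n+1) = (n+1)^n * (n+1) := by ring
      _ ≤ (3 * n^n) * (n+1) := Nat.mul_le_mul_right _ (aux_L1 n h)
      _ ≤ (3 * (3^n * n.factorial)) * (n+1) := by
          exact Nat.mul_le_mul_right _ (Nat.mul_le_mul_left _ ih)
      _ = 3^(n+1) * (n+1).factorial := by rw [Nat.factorial_succ]; ring

lemma aux_L3 (t : ℕ) (ht : 4 ≤ t) : 3^(t+1) < 4^t := by
  induction t with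
  | zero => omega
  | succ t ih =>
    rcases Nat.lt_or_ge t 4 with h | h
    · interval_cases t <;> simp_all
    · calc 3^(t+2) = 3 * 3^(t+1) := by ring
        _ < 3 * 4^t := by exact (Nat.mul_lt_mul_left (by norm_num)).mpr (ih h)
        _ ≤ 4^(t+1) := by ring_nf; omega

lemma aux_L4 (t : ℕ) (ht : 4 ≤ t) : (t+1)^t < 4^t * t.factorial := by
  have h1 : (t+1)^t ≤ 3 * t^t := aux_L1 t (by omega)
  have h2 : t^t ≤ 3^t * t.factorial := aux_L2 t
  have h3 : 3^(t+1) < 4^t := aux_L3 t ht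
  calc (t+1)^t ≤ 3 * (3^t * t.factorial) := le_trans h1 (Nat.mul_le_mul_left _ h2)
    _ = 3^(t+1) * t.factorial := by ring
    _ < 4^t * t.factorial := (Nat.mul_lt_mul_right (Nat.factorial_pos t)).mpr h3


/-- Directed 4-cycle pattern in the bipartite orientation `W` between `A` and `B`. -/
def HasFour {m : ℕ} (A B : Finset (Fin m)) (W : Fin m → Fin m → Bool) : Prop :=
  ∃ x ∈ A, ∃ x' ∈ A, ∃ y ∈ B, ∃ y' ∈ B,
    W x y = true ∧ W x' y = false ∧ W x' y' = true ∧ W x y' = false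

namespace BlowupAux

variable {m : ℕ}

def Sset (B : Finset (Fin m)) (W : Fin m → Fin m → Bool) (x : Fin m) : Finset (Fin m) :=
  B.filter (fun y => W x y = true)

def sz (B : Finset (Fin m)) (W : Fin m → Fin m → Bool) (x : Fin m) : ℕ := (Sset B W x).card

def cc (A : Finset (Fin m)) (W : Fin m → Fin m → Bool) (y : Fin m) : ℕ :=
  (A.filter (fun x => W x y = true)).card

def th (A B : Finset (Fin m)) (W : Fin m → Fin m → Bool) (x : Fin m) : ℕ :=
  (A.filter (fun x' => sz B W x ≤ sz B W x')).card

def rk (A B : Finset (Fin m)) (W : Fin m → Fin m → Bool) (y : Fin m) : ℕ :=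
  (B.filter (fun y' => cc A W y < cc A W y' ∨ (cc A W y = cc A W y' ∧ y' < y))).card

variable {A B : Finset (Fin m)} {W : Fin m → Fin m → Bool}

lemma chain_comp (hno : ¬ HasFour A B W) {x x' : Fin m} (hx : x ∈ A) (hx' : x' ∈ A) :
    Sset B W x ⊆ Sset B W x' ∨ Sset B W x' ⊆ Sset B W x := by
  by_contra hcon
  push_neg at hcon
  obtain ⟨h1, h2⟩ := hcon
  obtain ⟨y, hy, hy'⟩ := Finset.not_subset.1 h1
  obtain ⟨y', hz, hz'⟩ := Finset.not_subset.1 h2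
  rw [Sset, Finset.mem_filter] at hy hz
  apply hno
  refine ⟨x, hx, x', hx', y, hy.1, y', hz.1, hy.2, ?_, hz.2, ?_⟩
  · have : ¬ (W x' y = true) := fun hc => hy' (Finset.mem_filter.2 ⟨hy.1, hc⟩)
    simpa using this
  · have : ¬ (W x y' = true) := fun hc => hz' (Finset.mem_filter.2 ⟨hz.1, hc⟩)
    simpa using this

lemma chain_mem (hno : ¬ HasFour A B W) {x y : Fin m} (hx : x ∈ A) (hy : y ∈ B) :
    W x y = true ↔ th A B W x ≤ cc A W y := by
  constructor
  · intro hW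
    apply Finset.card_le_card
    intro x' hx'
    rw [Finset.mem_filter] at hx' ⊢
    refine ⟨hx'.1, ?_⟩
    have hcomp := chain_comp hno hx hx'.1
    have hsub : Sset B W x ⊆ Sset B W x' := by
      rcases hcomp with h | h
      · exact h
      · have : Sset B W x' = Sset B W x :=
          Finset.eq_of_subset_of_card_le h hx'.2
        rw [this]
    exact (Finset.mem_filter.1 (hsub (Finset.mem_filter.2 ⟨hy, hW⟩))).2
  · intro hth
    by_contra hW
    have hyS : y ∉ Sset B W x := fun hc => hW (Finset.mem_filter.1 hc).2
    -- c y < th x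
    have h1 : A.filter (fun x' => W x' y = true) ⊆ A.filter (fun x' => sz B W x < sz B W x') := by
      intro x' hx'
      rw [Finset.mem_filter] at hx' ⊢
      refine ⟨hx'.1, ?_⟩
      have hyS' : y ∈ Sset B W x' := Finset.mem_filter.2 ⟨hy, hx'.2⟩
      have hsub : Sset B W x ⊆ Sset B W x' := by
        rcases chain_comp hno hx hx'.1 with h | h
        · exact h
        · exact absurd (h hyS') hyS
      have hss : Sset B W x ⊂ Sset B W x' :=
        (Finset.ssubset_iff_of_subset hsub).2 ⟨y, hyS', hyS⟩
      exact Finset.card_lt_card hss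
    have h2 : A.filter (fun x' => sz B W x < sz B W x') ⊂
        A.filter (fun x' => sz B W x ≤ sz B W x') := by
      refine (Finset.ssubset_iff_of_subset ?_).2 ⟨x, ?_, ?_⟩
      · intro a ha
        rw [Finset.mem_filter] at ha ⊢
        exact ⟨ha.1, le_of_lt ha.2⟩
      · exact Finset.mem_filter.2 ⟨hx, le_refl _⟩
      · intro hc
        exact lt_irrefl _ (Finset.mem_filter.1 hc).2
    have h3 := lt_of_le_of_lt (Finset.card_le_card h1) (Finset.card_lt_card h2)
    have h4 : cc A W y < th A B W x := by rw [cc, th]; exact h3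
    omega

lemma rk_lt {y : Fin m} (hy : y ∈ B) : rk A B W y < B.card := by
  have hsub : B.filter (fun y' => cc A W y < cc A W y' ∨ (cc A W y = cc A W y' ∧ y' < y))
      ⊆ B.erase y := by
    intro y₁ hy₁
    rw [Finset.mem_filter] at hy₁
    refine Finset.mem_erase.2 ⟨?_, hy₁.1⟩
    rintro rfl
    rcases hy₁.2 with h | h
    · exact lt_irrefl _ h
    · exact lt_irrefl _ h.2
  have h1 := Finset.card_le_card hsub
  rw [Finset.card_erase_of_mem hy] at h1
  have h2 : 0 < B.card := Finset.card_pos.2 ⟨y, hy⟩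
  rw [rk]; omega

lemma recov (hno : ¬ HasFour A B W) {x y : Fin m} (hx : x ∈ A) (hy : y ∈ B) :
    W x y = true ↔ rk A B W y < sz B W x := by
  by_cases hW : W x y = true
  · simp only [hW, true_iff]
    have hyS : y ∈ Sset B W x := Finset.mem_filter.2 ⟨hy, hW⟩
    have hsub : B.filter (fun y' => cc A W y < cc A W y' ∨ (cc A W y = cc A W y' ∧ y' < y))
        ⊆ (Sset B W x).erase y := by
      intro y₁ hy₁
      rw [Finset.mem_filter] at hy₁
      have hth : th A B W x ≤ cc A W y := (chain_mem hno hx hy).1 hW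
      have hth1 : th A B W x ≤ cc A W y₁ := by
        rcases hy₁.2 with h | h
        · omega
        · omega
      have hmem : y₁ ∈ Sset B W x :=
        Finset.mem_filter.2 ⟨hy₁.1, (chain_mem hno hx hy₁.1).2 hth1⟩
      refine Finset.mem_erase.2 ⟨?_, hmem⟩
      rintro rfl
      rcases hy₁.2 with h | h
      · omega
      · exact lt_irrefl _ h.2
    have h1 : rk A B W y ≤ (Sset B W x).card - 1 := by
      have := Finset.card_le_card hsub
      rw [Finset.card_erase_of_mem hyS] at this
      exact this
    have h2 : 0 < (Sset B W x).card := Finset.card_pos.2 ⟨y, hyS⟩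
    rw [sz]; omega
  · refine iff_of_false hW ?_
    rw [not_lt]
    have hlt : cc A W y < th A B W x := by
      have hn : ¬ (th A B W x ≤ cc A W y) := fun hc => hW ((chain_mem hno hx hy).2 hc)
      omega
    have hsub : Sset B W x ⊆
        B.filter (fun y' => cc A W y < cc A W y' ∨ (cc A W y = cc A W y' ∧ y' < y)) := by
      intro y₁ hy₁
      rw [Sset, Finset.mem_filter] at hy₁
      have : th A B W x ≤ cc A W y₁ := (chain_mem hno hx hy₁.1).1 hy₁.2
      exact Finset.mem_filter.2 ⟨hy₁.1, Or.inl (by omega)⟩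
    exact Finset.card_le_card hsub

lemma rk_lt_rk {y y' : Fin m} (hy : y ∈ B) (hy' : y' ∈ B)
    (h : cc A W y' < cc A W y ∨ (cc A W y' = cc A W y ∧ y < y')) :
    rk A B W y < rk A B W y' := by
  apply Finset.card_lt_card
  refine (Finset.ssubset_iff_of_subset ?_).2 ⟨y, ?_, ?_⟩
  · intro y₁ hy₁
    rw [Finset.mem_filter] at hy₁ ⊢
    refine ⟨hy₁.1, ?_⟩
    rcases hy₁.2 with h1 | h1
    · rcases h with h2 | h2
      · exact Or.inl (by omega)
      · exact Or.inl (by omega)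
    · rcases h with h2 | h2
      · exact Or.inl (by omega)
      · exact Or.inr ⟨by omega, lt_trans h1.2 h2.2⟩
  · exact Finset.mem_filter.2 ⟨hy, h⟩
  · intro hc
    rcases (Finset.mem_filter.1 hc).2 with h1 | h1
    · exact lt_irrefl _ h1
    · exact lt_irrefl _ h1.2

lemma rk_inj {y y' : Fin m} (hy : y ∈ B) (hy' : y' ∈ B)
    (h : rk A B W y = rk A B W y') : y = y' := by
  by_contra hne
  rcases lt_trichotomy (cc A W y) (cc A W y') with hc | hc | hc
  · exact absurd h (ne_of_gt (rk_lt_rk hy' hy (Or.inl hc)))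
  · rcases lt_or_gt_of_ne (fun hc2 : y = y' => hne hc2) with hlt | hlt
    · exact absurd h (ne_of_lt (rk_lt_rk hy hy' (Or.inr ⟨hc.symm, hlt⟩)))
    · exact absurd h (ne_of_gt (rk_lt_rk hy' hy (Or.inr ⟨hc, hlt⟩)))
  · exact absurd h (ne_of_lt (rk_lt_rk hy hy' (Or.inl hc)))


instance hasFourDec {m : ℕ} (A B : Finset (Fin m)) (W : Fin m → Fin m → Bool) :
    Decidable (HasFour A B W) := by
  unfold HasFour; infer_instance

lemma card_noFour_le {m : ℕ} (t : ℕ) (A B : Finset (Fin m)) (hA : A.card = t) (hB : B.card = t) :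
    Fintype.card {W : Fin m → Fin m → Bool // ¬ HasFour A B W} ≤
      (t+1)^t * t.factorial * 2^(m*m - t*t) := by
  classical
  have hout : Fintype.card {p : Fin m × Fin m // p ∉ A ×ˢ B} = m*m - t*t := by
    have h1 : Fintype.card {p : Fin m × Fin m // p ∈ A ×ˢ B} = t*t := by
      rw [Fintype.card_coe, Finset.card_product, hA, hB]
    rw [Fintype.card_subtype_compl, h1, Fintype.card_prod, Fintype.card_fin]
  have hcard : Fintype.card ((↥A → Fin (t+1)) × (↥B ↪ Fin t) ×
      ({p : Fin m × Fin m // p ∉ A ×ˢ B} → Bool)) =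
      (t+1)^t * t.factorial * 2^(m*m - t*t) := by
    rw [Fintype.card_prod, Fintype.card_prod, Fintype.card_fun, Fintype.card_fun,
      Fintype.card_embedding_eq, Fintype.card_coe, Fintype.card_coe, hA, hB,
      Fintype.card_fin, Fintype.card_fin, Nat.descFactorial_self, hout,
      Fintype.card_bool, mul_assoc]
  rw [← hcard]
  have hF : ∀ (Wp : {W : Fin m → Fin m → Bool // ¬ HasFour A B W}) (x : ↥A),
      sz B Wp.1 x.1 < t + 1 := by
    intro Wp x
    have : sz B Wp.1 x.1 ≤ B.card := Finset.card_le_card (Finset.filter_subset _ _)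
    omega
  let F : {W : Fin m → Fin m → Bool // ¬ HasFour A B W} →
      ((↥A → Fin (t+1)) × (↥B ↪ Fin t) × ({p : Fin m × Fin m // p ∉ A ×ˢ B} → Bool)) :=
    fun Wp => ⟨fun x => ⟨sz B Wp.1 x.1, hF Wp x⟩,
      ⟨fun y => ⟨rk A B Wp.1 y.1, by rw [← hB]; exact rk_lt y.2⟩, by
        intro y y' hyy
        have := rk_inj y.2 y'.2 (by simpa [Fin.mk.injEq] using congrArg Fin.val hyy)
        exact Subtype.ext this⟩,
      fun p => Wp.1 p.1.1 p.1.2⟩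
  apply Fintype.card_le_of_injective F
  rintro ⟨W, hW⟩ ⟨W', hW'⟩ heq
  simp only [F, Prod.mk.injEq] at heq
  obtain ⟨h1, h2, h3⟩ := heq
  apply Subtype.ext
  funext u v
  show W u v = W' u v
  by_cases hmem : u ∈ A ∧ v ∈ B
  · have hs : sz B W u = sz B W' u := by
      have := congrFun h1 ⟨u, hmem.1⟩
      simpa [Fin.mk.injEq] using congrArg Fin.val this
    have hr : rk A B W v = rk A B W' v := by
      have := congrFun (congrArg DFunLike.coe h2) ⟨v, hmem.2⟩
      exact congrArg Fin.val this
    have e1 := recov hW hmem.1 hmem.2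
    have e2 := recov hW' hmem.1 hmem.2
    rw [hs, hr] at e1
    by_cases hb : W u v = true
    · rw [hb, Eq.symm (e2.2 (e1.1 hb))]
    · have hb' : ¬ (W' u v = true) := fun hc => hb (e1.2 (e2.1 hc))
      rw [Bool.not_eq_true] at hb hb'
      rw [hb, hb']
  · have hp : (u, v) ∉ A ×ˢ B := by
      rw [Finset.mem_product]
      exact hmem
    exact congrFun h3 ⟨(u, v), hp⟩



lemma hasFour_mono {m : ℕ} {A A' B B' : Finset (Fin m)} {W : Fin m → Fin m → Bool}
    (hA : A' ⊆ A) (hB : B' ⊆ B) (h : HasFour A' B' W) : HasFour A B W := by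
  obtain ⟨x, hx, x', hx', y, hy, y', hy', hc⟩ := h
  exact ⟨x, hA hx, x', hA hx', y, hB hy, y', hB hy', hc⟩

lemma exists_good (m t : ℕ) (ht : 4 ≤ t) (htm : t ≤ m)
    (hkey : 4^t * m^(2*t) ≤ 2^(t*t)) :
    ∃ W : Fin m → Fin m → Bool, ∀ A B : Finset (Fin m),
      t ≤ A.card → t ≤ B.card → HasFour A B W := by
  classical
  -- it suffices to find W good for sets of size exactly t
  suffices hsuff : ∃ W : Fin m → Fin m → Bool, ∀ A B : Finset (Fin m),
      A.card = t → B.card = t → HasFour A B W by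
    obtain ⟨W, hWg⟩ := hsuff
    refine ⟨W, fun A B hA hB => ?_⟩
    obtain ⟨A', hA'sub, hA'⟩ := Finset.exists_subset_card_eq hA
    obtain ⟨B', hB'sub, hB'⟩ := Finset.exists_subset_card_eq hB
    exact hasFour_mono hA'sub hB'sub (hWg A' B' hA' hB')
  by_contra hcon
  push_neg at hcon
  -- every W is bad, so the universe is covered by the union of bad sets
  have hcover : (Finset.univ : Finset (Fin m → Fin m → Bool)) ⊆
      ((Finset.univ.powersetCard t ×ˢ Finset.univ.powersetCard t).biUnion
        (fun AB => Finset.univ.filter (fun W => ¬ HasFour AB.1 AB.2 W))) := by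
    intro W _
    obtain ⟨A, B, hA, hB, hbad⟩ := hcon W
    refine Finset.mem_biUnion.2 ⟨(A, B), ?_, ?_⟩
    · rw [Finset.mem_product]
      exact ⟨Finset.mem_powersetCard.2 ⟨Finset.subset_univ _, hA⟩,
        Finset.mem_powersetCard.2 ⟨Finset.subset_univ _, hB⟩⟩
    · exact Finset.mem_filter.2 ⟨Finset.mem_univ _, hbad⟩
  have hcardV : (Finset.univ : Finset (Fin m → Fin m → Bool)).card = 2^(m*m) := by
    rw [Finset.card_univ, Fintype.card_fun, Fintype.card_fun, Fintype.card_bool,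
      Fintype.card_fin, ← pow_mul]
  have hsum : (Finset.univ : Finset (Fin m → Fin m → Bool)).card ≤
      (m.choose t * m.choose t) * ((t+1)^t * t.factorial * 2^(m*m - t*t)) := by
    calc (Finset.univ : Finset (Fin m → Fin m → Bool)).card
        ≤ ((Finset.univ.powersetCard t ×ˢ Finset.univ.powersetCard t).biUnion
          (fun AB => Finset.univ.filter (fun W => ¬ HasFour AB.1 AB.2 W))).card :=
          Finset.card_le_card hcover
      _ ≤ ∑ AB ∈ Finset.univ.powersetCard t ×ˢ Finset.univ.powersetCard t,
            (Finset.univ.filter (fun W => ¬ HasFour AB.1 AB.2 W)).card :=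
          Finset.card_biUnion_le
      _ ≤ ∑ _AB ∈ Finset.univ.powersetCard t ×ˢ Finset.univ.powersetCard t,
            ((t+1)^t * t.factorial * 2^(m*m - t*t)) := by
          apply Finset.sum_le_sum
          intro AB hAB
          rw [Finset.mem_product] at hAB
          have hA := (Finset.mem_powersetCard.1 hAB.1).2
          have hB := (Finset.mem_powersetCard.1 hAB.2).2
          have := card_noFour_le t AB.1 AB.2 hA hB
          rwa [Fintype.card_subtype] at this
      _ = (m.choose t * m.choose t) * ((t+1)^t * t.factorial * 2^(m*m - t*t)) := by
          rw [Finset.sum_const, Finset.card_product, Finset.card_powersetCard,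
            Finset.card_univ, Fintype.card_fin, smul_eq_mul]
  -- numeric contradiction
  have hnum : (m.choose t * m.choose t) * ((t+1)^t * t.factorial * 2^(m*m - t*t)) < 2^(m*m) := by
    have hCt : t.factorial * m.choose t ≤ m^t := by
      rw [← Nat.descFactorial_eq_factorial_mul_choose]
      exact Nat.descFactorial_le_pow m t
    have h4 : (t+1)^t < 4^t * t.factorial := aux_L4 t ht
    have hstep : (m.choose t * m.choose t * (t+1)^t * t.factorial) * t.factorial
        < 2^(t*t) * t.factorial := by
      have e1 : (m.choose t * m.choose t * (t+1)^t * t.factorial) * t.factorial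
          = (t.factorial * m.choose t) * (t.factorial * m.choose t) * (t+1)^t := by ring
      rw [e1]
      calc (t.factorial * m.choose t) * (t.factorial * m.choose t) * (t+1)^t
          ≤ m^t * m^t * (t+1)^t :=
            Nat.mul_le_mul_right _ (Nat.mul_le_mul hCt hCt)
        _ < m^t * m^t * (4^t * t.factorial) := by
            apply (Nat.mul_lt_mul_left ?_).2 h4
            have hm1 : 1 ≤ m := le_trans (by omega) htm
            positivity
        _ = (4^t * m^(2*t)) * t.factorial := by rw [two_mul, pow_add]; ring
        _ ≤ 2^(t*t) * t.factorial := Nat.mul_le_mul_right _ hkey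
    have hlt : m.choose t * m.choose t * (t+1)^t * t.factorial < 2^(t*t) :=
      Nat.lt_of_mul_lt_mul_right hstep
    have htt : t*t ≤ m*m := Nat.mul_le_mul htm htm
    calc (m.choose t * m.choose t) * ((t+1)^t * t.factorial * 2^(m*m - t*t))
        = (m.choose t * m.choose t * (t+1)^t * t.factorial) * 2^(m*m - t*t) := by ring
      _ < 2^(t*t) * 2^(m*m - t*t) := by
          exact (Nat.mul_lt_mul_right (Nat.pow_pos (by norm_num))).2 hlt
      _ = 2^(m*m) := by rw [← pow_add]; congr 1; omega
  rw [hcardV] at hsum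
  omega



/-- The orientation of the blow-up induced by a vertex ordering `ord` and a
bipartite tournament pattern `W`. -/
def Orient {α : Type*} (H : SimpleGraph α) (m : ℕ) (ord : α → ℕ)
    (W : Fin m → Fin m → Bool) : α × Fin m → α × Fin m → Prop :=
  fun a b => H.Adj a.1 b.1 ∧
    (if ord a.1 < ord b.1 then W a.2 b.2 = true else W b.2 a.2 = false)

lemma orient_isOrientation {α : Type*} (H : SimpleGraph α) (m : ℕ) (ord : α → ℕ)
    (hinj : Function.Injective ord) (W : Fin m → Fin m → Bool) :
    IsOrientation (blowup H m) (Orient H m ord W) := by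
  constructor
  · intro u v hu
    exact hu.1
  · intro u v hadj
    have hadj' : H.Adj u.1 v.1 := hadj
    have hne : ord u.1 ≠ ord v.1 := fun hc => hadj'.ne (hinj hc)
    rcases lt_or_gt_of_ne hne with hlt | hlt
    · simp only [Orient, if_pos hlt, if_neg (lt_asymm hlt)]
      simp [hadj', hadj'.symm]
    · simp only [Orient, if_neg (lt_asymm hlt), if_pos hlt]
      simp [hadj', hadj'.symm]

lemma chrom_le_card {V : Type*} [Fintype V] (D : V → V → Prop) (hirr : ∀ v, ¬ D v v) :
    ∃ f : V → Fin (Fintype.card V), ∀ i, IsAcyclicOn D {v | f v = i} := by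
  refine ⟨Fintype.equivFin V, fun i x _ hcyc => ?_⟩
  have hstep : ∀ a b : V, (a ∈ {v : V | Fintype.equivFin V v = i} ∧
      b ∈ {v : V | Fintype.equivFin V v = i} ∧ D a b) → False := by
    rintro a b ⟨ha, hb, hD⟩
    have hab : a = b := (Fintype.equivFin V).injective (ha.trans hb.symm)
    subst hab
    exact hirr a hD
  cases hcyc with
  | single h => exact hstep _ _ h
  | tail _ h2 => exact hstep _ _ h2



lemma orient_chrom_gt {α : Type*} [Fintype α] [Nonempty α] (H : SimpleGraph α)
    (k m t : ℕ) (hm : 0 < m) (ht : 0 < t) (hkt : k * (t-1) < m)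
    (hcol : ∀ n ≤ k, ¬ H.Colorable n)
    (ord : α → ℕ) (hinj : Function.Injective ord)
    (W : Fin m → Fin m → Bool)
    (hW : ∀ A B : Finset (Fin m), t ≤ A.card → t ≤ B.card → HasFour A B W)
    (n : ℕ) (f : α × Fin m → Fin n)
    (hf : ∀ i, IsAcyclicOn (Orient H m ord W) {v | f v = i}) : k < n := by
  classical
  by_contra hnk
  push_neg at hnk
  -- pigeonhole within each blob
  have hpig : ∀ u : α, ∃ i : Fin n,
      t ≤ (Finset.univ.filter (fun j : Fin m => f (u, j) = i)).card := by
    intro u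
    by_contra hc
    push_neg at hc
    have hsum : ∑ i : Fin n, (Finset.univ.filter (fun j : Fin m => f (u, j) = i)).card = m := by
      rw [← Finset.card_eq_sum_card_fiberwise (fun x _ => Finset.mem_univ (f (u, x)))]
      simp
    have hle : ∀ i : Fin n, (Finset.univ.filter (fun j : Fin m => f (u, j) = i)).card ≤ t - 1 := by
      intro i
      have := hc i
      omega
    have hsum2 : m ≤ n * (t-1) := by
      rw [← hsum]
      calc ∑ i : Fin n, (Finset.univ.filter (fun j : Fin m => f (u, j) = i)).card
          ≤ ∑ _i : Fin n, (t-1) := Finset.sum_le_sum (fun i _ => hle i)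
        _ = n * (t-1) := by rw [Finset.sum_const, Finset.card_univ, Fintype.card_fin, smul_eq_mul]
    have : n * (t-1) ≤ k * (t-1) := Nat.mul_le_mul_right _ hnk
    omega
  choose c hc using hpig
  -- c is not a proper colouring
  have himp : ¬ ∀ u v : α, H.Adj u v → c u ≠ c v := by
    intro hproper
    exact hcol n hnk ⟨SimpleGraph.Coloring.mk c (fun {u v} h => hproper u v h)⟩
  push_neg at himp
  obtain ⟨u, v, hadj, hcuv⟩ := himp
  set i := c u with hi
  have hcu : t ≤ (Finset.univ.filter (fun j : Fin m => f (u, j) = i)).card := hc u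
  have hcv : t ≤ (Finset.univ.filter (fun j : Fin m => f (v, j) = i)).card := by
    have h := hc v
    rw [← hcuv] at h
    exact h
  have hordne : ord u ≠ ord v := fun hce => hadj.ne (hinj hce)
  have hDlo : ∀ (a b : α) (x y : Fin m), H.Adj a b → ord a < ord b → W x y = true →
      Orient H m ord W (a, x) (b, y) := by
    intro a b x y hab hor hw
    exact ⟨hab, by rw [if_pos hor]; exact hw⟩
  have hDhi : ∀ (a b : α) (x y : Fin m), H.Adj a b → ord b < ord a → W y x = false →
      Orient H m ord W (a, x) (b, y) := by
    intro a b x y hab hor hw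
    exact ⟨hab, by rw [if_neg (not_lt.2 (le_of_lt hor))]; exact hw⟩
  rcases lt_or_gt_of_ne hordne with hord | hord
  · obtain ⟨x, hx, x', hx', y, hy, y', hy', h1, h2, h3, h4⟩ :=
      hW (Finset.univ.filter (fun j : Fin m => f (u, j) = i))
        (Finset.univ.filter (fun j : Fin m => f (v, j) = i)) hcu hcv
    have m1 : (u, x) ∈ {w : α × Fin m | f w = i} := (Finset.mem_filter.1 hx).2
    have m2 : (v, y) ∈ {w : α × Fin m | f w = i} := (Finset.mem_filter.1 hy).2
    have m3 : (u, x') ∈ {w : α × Fin m | f w = i} := (Finset.mem_filter.1 hx').2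
    have m4 : (v, y') ∈ {w : α × Fin m | f w = i} := (Finset.mem_filter.1 hy').2
    refine hf i (u, x) m1 ?_
    exact (((Relation.TransGen.single
        ⟨m1, m2, hDlo u v x y hadj hord h1⟩).tail
        ⟨m2, m3, hDhi v u y x' hadj.symm hord h2⟩).tail
        ⟨m3, m4, hDlo u v x' y' hadj hord h3⟩).tail
        ⟨m4, m1, hDhi v u y' x hadj.symm hord h4⟩
  · obtain ⟨y, hy, y', hy', x, hx, x', hx', h1, h2, h3, h4⟩ :=
      hW (Finset.univ.filter (fun j : Fin m => f (v, j) = i))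
        (Finset.univ.filter (fun j : Fin m => f (u, j) = i)) hcv hcu
    have m1 : (v, y) ∈ {w : α × Fin m | f w = i} := (Finset.mem_filter.1 hy).2
    have m2 : (u, x) ∈ {w : α × Fin m | f w = i} := (Finset.mem_filter.1 hx).2
    have m3 : (v, y') ∈ {w : α × Fin m | f w = i} := (Finset.mem_filter.1 hy').2
    have m4 : (u, x') ∈ {w : α × Fin m | f w = i} := (Finset.mem_filter.1 hx').2
    refine hf i (v, y) m1 ?_
    exact (((Relation.TransGen.single
        ⟨m1, m2, hDlo v u y x hadj.symm hord h1⟩).tail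
        ⟨m2, m3, hDhi u v x y' hadj hord h2⟩).tail
        ⟨m3, m4, hDlo v u y' x' hadj.symm hord h3⟩).tail
        ⟨m4, m1, hDhi u v x' y hadj hord h4⟩

end BlowupAux

end AuxiliaryLemmas

/-- **Lemma 3.2.** If `2 + 2 log₂ m ≤ ⌈m/k⌉` and `χ(H) > k`, then the
dichromatic number of the blow-up `H^(m)` is greater than `k`. -/
theorem dichromatic_blowup_gt {α : Type*} [Fintype α] [DecidableEq α]
    (k m : ℕ) (hk : 0 < k) (hm : 0 < m)
    (h : 2 + 2 * Real.logb 2 (m : ℝ) ≤ (⌈(m : ℝ) / (k : ℝ)⌉₊ : ℝ))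
    (H : SimpleGraph α) (hH : (k : ℕ∞) < H.chromaticNumber) :
    k < dichromatic (blowup H m) := by
  classical
  set t := ⌈(m : ℝ) / (k : ℝ)⌉₊ with htdef
  have hmR : (0:ℝ) < m := by exact_mod_cast hm
  have hkR : (0:ℝ) < k := by exact_mod_cast hk
  have htm : t ≤ m := by
    rw [htdef]
    exact_mod_cast Nat.ceil_le.2 (div_le_self hmR.le (by exact_mod_cast hk))
  have e1 : (2:ℝ) ^ (Real.logb 2 (m:ℝ)) = m :=
    Real.rpow_logb (by norm_num) (by norm_num) hmR
  have hR : (2:ℝ)*2*((m:ℝ)*(m:ℝ)) ≤ ((2^t : ℕ) : ℝ) := by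
    have e2 : (2:ℝ) ^ ((2:ℝ) + 2 * Real.logb 2 (m:ℝ)) = 2*2*((m:ℝ)*(m:ℝ)) := by
      have e3 : (2:ℝ) + 2 * Real.logb 2 (m:ℝ) =
          1 + 1 + (Real.logb 2 (m:ℝ) + Real.logb 2 (m:ℝ)) := by ring
      rw [e3, Real.rpow_add (by norm_num : (0:ℝ) < 2),
        Real.rpow_add (by norm_num : (0:ℝ) < 2),
        Real.rpow_add (by norm_num : (0:ℝ) < 2), Real.rpow_one, e1]
    calc (2:ℝ)*2*((m:ℝ)*(m:ℝ)) = (2:ℝ) ^ ((2:ℝ) + 2 * Real.logb 2 (m:ℝ)) := e2.symm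
      _ ≤ (2:ℝ) ^ ((t:ℕ):ℝ) := Real.rpow_le_rpow_of_exponent_le one_le_two h
      _ = ((2^t : ℕ) : ℝ) := by rw [Real.rpow_natCast]; norm_cast
  have h2m : 4*(m*m) ≤ 2^t := by
    have h4 : ((4*(m*m) : ℕ) : ℝ) ≤ ((2^t : ℕ) : ℝ) := by push_cast at hR ⊢; linarith
    exact_mod_cast h4
  have ht4 : 4 ≤ t := by
    by_contra hlt
    push_neg at hlt
    have h8 : 2^t ≤ 8 := by
      calc 2^t ≤ 2^3 := Nat.pow_le_pow_right (by norm_num) (by omega)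
        _ = 8 := by norm_num
    have hm2 : m*m ≤ 2 := by omega
    have hm1 : m = 1 := by nlinarith
    have ht1 : t ≤ 1 := by omega
    have h2t : 2^t ≤ 2 := by
      calc 2^t ≤ 2^1 := Nat.pow_le_pow_right (by norm_num) ht1
        _ = 2 := by norm_num
    rw [hm1] at h2m
    omega
  have hkt : k * (t-1) < m := by
    have hlt : ((t-1 : ℕ) : ℝ) < (m:ℝ)/(k:ℝ) := by
      apply Nat.lt_ceil.1
      rw [← htdef]
      omega
    rw [lt_div_iff₀ hkR] at hlt
    have h5 : (t-1)*k < m := by exact_mod_cast hlt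
    rw [Nat.mul_comm]
    exact h5
  have hkey : 4^t * m^(2*t) ≤ 2^(t*t) := by
    calc 4^t * m^(2*t) = (4*(m*m))^t := by
          rw [mul_pow, pow_mul, pow_two]
      _ ≤ (2^t)^t := Nat.pow_le_pow_left h2m t
      _ = 2^(t*t) := (pow_mul 2 t t).symm
  have htpos : 0 < t := by omega
  have hα : Nonempty α := by
    by_contra hemp
    rw [not_nonempty_iff] at hemp
    have hle : H.chromaticNumber ≤ 0 := (SimpleGraph.Colorable.of_isEmpty (G := H) 0).chromaticNumber_le
    have := lt_of_lt_of_le hH hle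
    exact (not_lt.2 zero_le) (by exact_mod_cast this)
  haveI := hα
  have hcol : ∀ n ≤ k, ¬ H.Colorable n := by
    intro n hn hcoln
    have h1 : H.chromaticNumber ≤ n := hcoln.chromaticNumber_le
    have h2 : (n:ℕ∞) ≤ (k:ℕ∞) := by exact_mod_cast hn
    exact absurd hH (not_lt.2 (le_trans h1 h2))
  obtain ⟨W, hWgood⟩ := BlowupAux.exists_good m t ht4 htm hkey
  set ord : α → ℕ := fun a => (Fintype.equivFin α a : ℕ) with hordd
  have hordinj : Function.Injective ord := fun a b hab =>
    (Fintype.equivFin α).injective (Fin.val_injective hab)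
  set D := BlowupAux.Orient H m ord W with hDdef
  have hOri : IsOrientation (blowup H m) D :=
    BlowupAux.orient_isOrientation H m ord hordinj W
  have hirr : ∀ v, ¬ D v v := fun v hv => (blowup H m).loopless.irrefl v (hOri.1 v v hv)
  have hchrom : k < digraphChrom D := by
    have hmem : Fintype.card (α × Fin m) ∈
        {n : ℕ | ∃ f : (α × Fin m) → Fin n, ∀ i, IsAcyclicOn D {v | f v = i}} :=
      BlowupAux.chrom_le_card D hirr
    have hsInf := Nat.sInf_mem (Set.nonempty_of_mem hmem)
    obtain ⟨f, hfr⟩ := hsInf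
    exact BlowupAux.orient_chrom_gt H k m t hm htpos hkt hcol ord hordinj W hWgood _ f hfr
  have hBdd : BddAbove {n : ℕ | ∃ D' : (α × Fin m) → (α × Fin m) → Prop,
      IsOrientation (blowup H m) D' ∧ n = digraphChrom D'} := by
    refine ⟨Fintype.card (α × Fin m), ?_⟩
    rintro n ⟨D', hD', rfl⟩
    have hirr' : ∀ v, ¬ D' v v := fun v hv => (blowup H m).loopless.irrefl v (hD'.1 v v hv)
    exact Nat.sInf_le (BlowupAux.chrom_le_card D' hirr')
  have hmemS : digraphChrom D ∈ {n : ℕ | ∃ D' : (α × Fin m) → (α × Fin m) → Prop,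
      IsOrientation (blowup H m) D' ∧ n = digraphChrom D'} := ⟨D, hOri, rfl⟩
  exact lt_of_lt_of_le hchrom (le_csSup hBdd hmemS)
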